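/- Let $0 < a_1 < a_2 < \bar a$ and $0 \le \omega < V_*$. Then $\Upsilon_\omega(a_2) \le \Upsilon_\omega(a_1) + \Upsilon_\omega\big(\sqrt{a_2^2 - a_1^2}\big)$. Moreover, if $\Upsilon_\omega(a_1)$ or $\Upsilon_\omega(\sqrt{a_2^2-a_1^2})$ is attained, the inequality is strict. -/

import Mathlib

open MeasureTheory Set

noncomputable section

/-- Points of `ℝ³`. -/
abbrev E3 := EuclideanSpace ℝ (Fin 3)

/-- The dipole kernel `K(x) = (1 - 3 cos²θ(x)) / |x|³`, where `θ(x)` is the angle between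
`x` and the dipole axis `(0,0,1)`, so that `cos θ(x) = x₃ / |x|`. -/
def K3 (x : E3) : ℝ := (1 - 3 * (x 2 / ‖x‖) ^ 2) / ‖x‖ ^ 3

/-- The nonlinear potential energy `N(u) = ∫ λ₁|u|⁴ + λ₂ (K ∗ |u|²)|u|² dx`. -/
def Nfun (l1 l2 : ℝ) (u : E3 → ℝ) : ℝ :=
  ∫ x : E3, (l1 * (u x) ^ 4 + l2 * (∫ y : E3, K3 (x - y) * (u y) ^ 2) * (u x) ^ 2)

/-- `‖u‖₂² = ∫ |u|²`. -/
def massSq (u : E3 → ℝ) : ℝ := ∫ x : E3, (u x) ^ 2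

/-- `‖∇u‖₂² = ∫ |∇u|²`. -/
def gradSq (u : E3 → ℝ) : ℝ := ∫ x : E3, ‖fderiv ℝ u x‖ ^ 2

/-- `‖u‖ₚᵖ = ∫ |u|ᵖ`. -/
def Pnorm (p : ℝ) (u : E3 → ℝ) : ℝ := ∫ x : E3, |u x| ^ p

/-- The energy functional
`J_ω(u) = (1/2)‖∇u‖₂² + ω‖u‖₂² + (1/2)N(u) + (2λ₃/p)‖u‖ₚᵖ`. -/
def Jfun (ω l1 l2 l3 p : ℝ) (u : E3 → ℝ) : ℝ :=
  1 / 2 * gradSq u + ω * massSq u + 1 / 2 * Nfun l1 l2 u + 2 * l3 / p * Pnorm p u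

/-- `W^a_{r̄} = {u ∈ S(a) : ‖∇u‖₂ < r̄}`. -/
def Wset (a rbar : ℝ) : Set (E3 → ℝ) :=
  {u | massSq u = a ^ 2 ∧ Real.sqrt (gradSq u) < rbar}

/-- `∂W^a_{r̄} = {u ∈ S(a) : ‖∇u‖₂ = r̄}`. -/
def bdryWset (a rbar : ℝ) : Set (E3 → ℝ) :=
  {u | massSq u = a ^ 2 ∧ Real.sqrt (gradSq u) = rbar}

/-- The unstable regime `𝓑 = {(λ₁,λ₂) : λ₁ < (4π/3)λ₂ ≤ 0 or λ₁ < -(8π/3)λ₂ ≤ 0}`. -/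
def Bset : Set (ℝ × ℝ) :=
  {q | (q.1 < 4 * Real.pi / 3 * q.2 ∧ 4 * Real.pi / 3 * q.2 ≤ 0) ∨
       (q.1 < -(8 * Real.pi / 3) * q.2 ∧ -(8 * Real.pi / 3) * q.2 ≤ 0)}

/- ### Auxiliary lemmas -/

lemma integral_scale (f : E3 → ℝ) (c : ℝ) (hc : 0 < c) :
    ∫ x : E3, f (c⁻¹ • x) = c ^ 3 * ∫ x : E3, f x := by
  rw [MeasureTheory.Measure.integral_comp_smul volume f c⁻¹, finrank_euclideanSpace_fin,
    smul_eq_mul, abs_of_pos (by positivity)]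
  field_simp

lemma coe_smul_id (c : ℝ) : (fun y : E3 => c • y) = ⇑(c • ContinuousLinearMap.id ℝ E3) := by
  funext y; simp

lemma fderiv_comp_smul_E3 (u : E3 → ℝ) (c : ℝ) (hc : c ≠ 0) (x : E3) :
    fderiv ℝ (fun y => u (c • y)) x = c • fderiv ℝ u (c • x) := by
  by_cases h : DifferentiableAt ℝ u (c • x)
  · have hd : DifferentiableAt ℝ (fun y : E3 => c • y) x := by
      rw [coe_smul_id]; exact (c • ContinuousLinearMap.id ℝ E3).differentiableAt
    have he : (fun y => u (c • y)) = u ∘ (fun y : E3 => c • y) := rfl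
    rw [he, fderiv_comp x h hd]
    have hf : fderiv ℝ (fun y : E3 => c • y) x = c • ContinuousLinearMap.id ℝ E3 := by
      rw [coe_smul_id]; exact (c • ContinuousLinearMap.id ℝ E3).fderiv
    rw [hf]; ext y; simp
  · have h2 : ¬ DifferentiableAt ℝ (fun y => u (c • y)) x := by
      intro hv
      apply h
      have he : u = (fun y => u (c • y)) ∘ (fun z : E3 => c⁻¹ • z) := by
        funext z; simp [smul_smul, mul_inv_cancel₀ hc]
      rw [he]
      apply DifferentiableAt.comp
      · simpa [smul_smul, inv_mul_cancel₀ hc] using hv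
      · rw [coe_smul_id]; exact (c⁻¹ • ContinuousLinearMap.id ℝ E3).differentiableAt
    rw [fderiv_zero_of_not_differentiableAt h, fderiv_zero_of_not_differentiableAt h2, smul_zero]

lemma K3_smul (c : ℝ) (hc : 0 < c) (y : E3) : K3 (c • y) = c⁻¹ ^ 3 * K3 y := by
  unfold K3
  by_cases hy : y = 0
  · simp [hy]
  · have hny : (0:ℝ) < ‖y‖ := norm_pos_iff.mpr hy
    have h1 : (c • y) 2 = c * y 2 := by simp
    rw [h1, norm_smul, Real.norm_eq_abs, abs_of_pos hc]
    rw [mul_div_mul_left _ _ (ne_of_gt hc), mul_pow, inv_pow]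
    rw [div_mul_eq_div_div_swap, inv_mul_eq_div, div_div]

lemma massSq_scale (u : E3 → ℝ) (c : ℝ) (hc : 0 < c) :
    massSq (fun x => u (c⁻¹ • x)) = c ^ 3 * massSq u :=
  integral_scale (fun z => (u z) ^ 2) c hc

lemma Pnorm_scale (p : ℝ) (u : E3 → ℝ) (c : ℝ) (hc : 0 < c) :
    Pnorm p (fun x => u (c⁻¹ • x)) = c ^ 3 * Pnorm p u :=
  integral_scale (fun z => |u z| ^ p) c hc

lemma gradSq_scale (u : E3 → ℝ) (c : ℝ) (hc : 0 < c) :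
    gradSq (fun x => u (c⁻¹ • x)) = c * gradSq u := by
  unfold gradSq
  have h1 : ∀ x : E3, ‖fderiv ℝ (fun y => u (c⁻¹ • y)) x‖ ^ 2
      = c⁻¹ ^ 2 * ‖fderiv ℝ u (c⁻¹ • x)‖ ^ 2 := by
    intro x
    rw [fderiv_comp_smul_E3 u c⁻¹ (by positivity) x, norm_smul, Real.norm_eq_abs,
      abs_of_pos (by positivity : (0:ℝ) < c⁻¹)]
    ring
  simp_rw [h1]
  rw [integral_const_mul, integral_scale (fun z => ‖fderiv ℝ u z‖ ^ 2) c hc]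
  field_simp

lemma Nfun_scale (l1 l2 : ℝ) (u : E3 → ℝ) (c : ℝ) (hc : 0 < c) :
    Nfun l1 l2 (fun x => u (c⁻¹ • x)) = c ^ 3 * Nfun l1 l2 u := by
  unfold Nfun
  have hcc : ∀ z : E3, c • c⁻¹ • z = z := by
    intro z; rw [smul_smul, mul_inv_cancel₀ (ne_of_gt hc), one_smul]
  have hinner : ∀ x : E3, (∫ y : E3, K3 (x - y) * (u (c⁻¹ • y)) ^ 2)
      = c ^ 3 * ∫ y : E3, K3 (x - c • y) * (u y) ^ 2 := by
    intro x
    have : ∀ y : E3, K3 (x - y) * (u (c⁻¹ • y)) ^ 2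
        = (fun z => K3 (x - c • z) * (u z) ^ 2) (c⁻¹ • y) := by
      intro y; simp only [hcc]
    simp_rw [this]
    exact integral_scale (fun z => K3 (x - c • z) * (u z) ^ 2) c hc
  simp_rw [hinner]
  set G : E3 → ℝ := fun w => l1 * (u w) ^ 4
      + l2 * (c ^ 3 * ∫ y : E3, K3 (c • w - c • y) * (u y) ^ 2) * (u w) ^ 2 with hG
  have hsc := integral_scale G c hc
  have houter : (∫ x : E3,
      (l1 * (u (c⁻¹ • x)) ^ 4 + l2 * (c ^ 3 * ∫ y : E3, K3 (x - c • y) * (u y) ^ 2) * (u (c⁻¹ • x)) ^ 2))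
      = ∫ x : E3, G (c⁻¹ • x) := by
    apply integral_congr_ae
    filter_upwards with x
    simp only [hG, hcc]
  rw [houter, hsc]
  congr 1
  apply integral_congr_ae
  filter_upwards with w
  have : ∀ y : E3, K3 (c • w - c • y) * (u y) ^ 2 = c⁻¹ ^ 3 * (K3 (w - y) * (u y) ^ 2) := by
    intro y
    rw [← smul_sub, K3_smul c hc]
    ring
  simp only [hG]
  simp_rw [this]
  rw [integral_const_mul]
  field_simp

lemma Jfun_scale (ω l1 l2 l3 p : ℝ) (u : E3 → ℝ) (c : ℝ) (hc : 0 < c) :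
    Jfun ω l1 l2 l3 p (fun x => u (c⁻¹ • x))
      = c ^ 3 * Jfun ω l1 l2 l3 p u + 1 / 2 * (c - c ^ 3) * gradSq u := by
  unfold Jfun
  rw [massSq_scale u c hc, Pnorm_scale p u c hc, gradSq_scale u c hc, Nfun_scale l1 l2 u c hc]
  ring

lemma consts_fact (Λ C4 Cp l3 p γp α abar rbar : ℝ)
    (hΛ : 0 < Λ) (hC4 : 0 < C4) (hCp : 0 < Cp) (hl3 : l3 < 0)
    (hp1 : 2 < p) (hp2 : p < 10 / 3)
    (hγ : γp = 3 * (p - 2) / (2 * p))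
    (hα : α = 1 / 2 * (Λ * C4 ^ 4) ^ ((p * γp - 2) / (p * γp - 3))
        * (4 * |l3| * (2 - p * γp) * Cp ^ p / p) ^ (1 / (3 - p * γp))
      + 2 * (Cp ^ p * |l3| / p) ^ (1 / (3 - p * γp))
        * (4 * (2 - p * γp) / (Λ * C4 ^ 4)) ^ ((p * γp - 2) / (3 - p * γp)))
    (habar : abar = (1 / (2 * α)) ^ ((3 : ℝ) / 4))
    (hrbar : rbar = (4 * |l3| * (2 - p * γp) * Cp ^ p * abar ^ ((1 - γp) * p - 1)
      / (Λ * C4 ^ 4 * p)) ^ (1 / (3 - p * γp))) :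
    0 < abar ∧ 0 < rbar ∧
      Λ / 2 * C4 ^ 4 * rbar * abar
        + 2 * |l3| / p * Cp ^ p * abar ^ (p * (1 - γp)) * rbar ^ (p * γp - 2) = 1 / 2 := by
  have hp0 : (0:ℝ) < p := by linarith
  have habs : 0 < |l3| := abs_pos.mpr (ne_of_lt hl3)
  have hq : p * γp = 3 * (p - 2) / 2 := by rw [hγ]; field_simp
  have hq2 : p * γp < 2 := by rw [hq]; linarith
  have hq0 : 0 < p * γp := by rw [hq]; linarith
  have h3q : 0 < 3 - p * γp := by linarith
  have h3q' : (3 - p * γp) ≠ 0 := ne_of_gt h3q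
  have hq3' : (p * γp - 3) ≠ 0 := by intro h; apply h3q'; linarith
  have hA : 0 < Λ * C4 ^ 4 := by positivity
  have hCpp : 0 < Cp ^ p := Real.rpow_pos_of_pos hCp p
  have hB : 0 < 4 * |l3| * (2 - p * γp) * Cp ^ p / p := by
    apply div_pos _ hp0
    have h2q : (0:ℝ) < 2 - p * γp := by linarith
    positivity
  have hm : 0 < Cp ^ p * |l3| / p := by positivity
  have hD : 0 < 4 * (2 - p * γp) / (Λ * C4 ^ 4) := by
    apply div_pos _ hA
    have h2q : (0:ℝ) < 2 - p * γp := by linarith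
    positivity
  have hαpos : 0 < α := by
    rw [hα]
    have t1 : 0 < 1 / 2 * (Λ * C4 ^ 4) ^ ((p * γp - 2) / (p * γp - 3))
        * (4 * |l3| * (2 - p * γp) * Cp ^ p / p) ^ (1 / (3 - p * γp)) :=
      mul_pos (mul_pos one_half_pos (Real.rpow_pos_of_pos hA _)) (Real.rpow_pos_of_pos hB _)
    have t2 : 0 < 2 * (Cp ^ p * |l3| / p) ^ (1 / (3 - p * γp))
        * (4 * (2 - p * γp) / (Λ * C4 ^ 4)) ^ ((p * γp - 2) / (3 - p * γp)) :=
      mul_pos (mul_pos two_pos (Real.rpow_pos_of_pos hm _)) (Real.rpow_pos_of_pos hD _)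
    linarith
  have habarpos : 0 < abar := by
    rw [habar]; exact Real.rpow_pos_of_pos (by positivity) _
  have hbase : 4 * |l3| * (2 - p * γp) * Cp ^ p * abar ^ ((1 - γp) * p - 1) / (Λ * C4 ^ 4 * p)
      = (4 * |l3| * (2 - p * γp) * Cp ^ p / p / (Λ * C4 ^ 4)) * abar ^ ((1 - γp) * p - 1) := by
    ring
  have hBA : 0 < 4 * |l3| * (2 - p * γp) * Cp ^ p / p / (Λ * C4 ^ 4) := div_pos hB hA
  have hexp13 : ((1 - γp) * p - 1) * (1 / (3 - p * γp)) = 1 / 3 := by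
    have h1 : (1 - γp) * p - 1 = (3 - p * γp) / 3 := by linear_combination (-(2:ℝ)/3) * hq
    rw [h1]; field_simp
  have hrb : rbar = (4 * |l3| * (2 - p * γp) * Cp ^ p / p / (Λ * C4 ^ 4)) ^ (1 / (3 - p * γp))
      * abar ^ ((1:ℝ) / 3) := by
    rw [hrbar, hbase, Real.mul_rpow hBA.le (Real.rpow_pos_of_pos habarpos _).le,
      ← Real.rpow_mul habarpos.le, hexp13]
  have hrbarpos : 0 < rbar := by
    rw [hrb]
    exact mul_pos (Real.rpow_pos_of_pos hBA _) (Real.rpow_pos_of_pos habarpos _)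
  refine ⟨habarpos, hrbarpos, ?_⟩
  have habar43 : abar ^ ((4:ℝ) / 3) = 1 / (2 * α) := by
    rw [habar, ← Real.rpow_mul (by positivity : (0:ℝ) ≤ 1 / (2 * α))]
    norm_num
  have hApow : 0 < (Λ * C4 ^ 4) ^ (1 / (3 - p * γp)) := Real.rpow_pos_of_pos hA _
  have h2 : (Λ * C4 ^ 4) ^ ((p * γp - 2) / (p * γp - 3))
      = (Λ * C4 ^ 4) / (Λ * C4 ^ 4) ^ (1 / (3 - p * γp)) := by
    rw [eq_div_iff (ne_of_gt hApow), ← Real.rpow_add hA]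
    rw [show (p * γp - 2) / (p * γp - 3) + 1 / (3 - p * γp) = 1 by field_simp; ring]
    exact Real.rpow_one _
  have hT1 : Λ / 2 * C4 ^ 4 * rbar * abar
      = (1 / 2 * (Λ * C4 ^ 4) ^ ((p * γp - 2) / (p * γp - 3))
        * (4 * |l3| * (2 - p * γp) * Cp ^ p / p) ^ (1 / (3 - p * γp))) * abar ^ ((4:ℝ) / 3) := by
    rw [hrb, Real.div_rpow hB.le hA.le, h2]
    have habarmul : abar * abar ^ ((1:ℝ) / 3) = abar ^ ((4:ℝ) / 3) := by
      nth_rewrite 1 [← Real.rpow_one abar]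
      rw [← Real.rpow_add habarpos]; norm_num
    rw [← habarmul]
    field_simp
  have hDm : 4 * |l3| * (2 - p * γp) * Cp ^ p / p / (Λ * C4 ^ 4)
      = (4 * (2 - p * γp) / (Λ * C4 ^ 4)) * (Cp ^ p * |l3| / p) := by ring
  have hsplit : rbar ^ (p * γp - 2)
      = (4 * (2 - p * γp) / (Λ * C4 ^ 4)) ^ ((p * γp - 2) / (3 - p * γp))
        * (Cp ^ p * |l3| / p) ^ ((p * γp - 2) / (3 - p * γp))
        * abar ^ ((1 / 3) * (p * γp - 2)) := by
    rw [hrb, Real.mul_rpow (Real.rpow_pos_of_pos hBA _).le (Real.rpow_pos_of_pos habarpos _).le,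
      ← Real.rpow_mul hBA.le, ← Real.rpow_mul habarpos.le,
      show (1 / (3 - p * γp)) * (p * γp - 2) = (p * γp - 2) / (3 - p * γp) from by ring,
      hDm, Real.mul_rpow hD.le hm.le]
  have hmpow : (Cp ^ p * |l3| / p) * (Cp ^ p * |l3| / p) ^ ((p * γp - 2) / (3 - p * γp))
      = (Cp ^ p * |l3| / p) ^ (1 / (3 - p * γp)) := by
    nth_rewrite 1 [← Real.rpow_one (Cp ^ p * |l3| / p)]
    rw [← Real.rpow_add hm]
    congr 1
    field_simp
    ring
  have habarcomb : abar ^ (p * (1 - γp)) * abar ^ ((1 / 3) * (p * γp - 2)) = abar ^ ((4:ℝ) / 3) := by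
    rw [← Real.rpow_add habarpos]
    congr 1
    linear_combination (-(2:ℝ)/3) * hq
  have hT2 : 2 * |l3| / p * Cp ^ p * abar ^ (p * (1 - γp)) * rbar ^ (p * γp - 2)
      = (2 * (Cp ^ p * |l3| / p) ^ (1 / (3 - p * γp))
        * (4 * (2 - p * γp) / (Λ * C4 ^ 4)) ^ ((p * γp - 2) / (3 - p * γp))) * abar ^ ((4:ℝ) / 3) := by
    rw [hsplit]
    calc 2 * |l3| / p * Cp ^ p * abar ^ (p * (1 - γp))
          * ((4 * (2 - p * γp) / (Λ * C4 ^ 4)) ^ ((p * γp - 2) / (3 - p * γp))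
            * (Cp ^ p * |l3| / p) ^ ((p * γp - 2) / (3 - p * γp))
            * abar ^ ((1 / 3) * (p * γp - 2)))
        = (2 * (4 * (2 - p * γp) / (Λ * C4 ^ 4)) ^ ((p * γp - 2) / (3 - p * γp)))
          * ((Cp ^ p * |l3| / p) * (Cp ^ p * |l3| / p) ^ ((p * γp - 2) / (3 - p * γp)))
          * (abar ^ (p * (1 - γp)) * abar ^ ((1 / 3) * (p * γp - 2))) := by ring
      _ = _ := by rw [hmpow, habarcomb]; ring
  rw [hT1, hT2, ← add_mul, ← hα, habar43]
  field_simp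

set_option maxHeartbeats 1000000 in
lemma rbound_fact (Λ C4 Cp l3 p γp abar rbar b r : ℝ)
    (hΛ : 0 < Λ) (hC4 : 0 < C4) (hCp : 0 < Cp) (hl3 : l3 < 0)
    (hp1 : 2 < p) (hp2 : p < 10 / 3)
    (hγ : γp = 3 * (p - 2) / (2 * p))
    (habarpos : 0 < abar) (hrbarpos : 0 < rbar)
    (hTT : Λ / 2 * C4 ^ 4 * rbar * abar
        + 2 * |l3| / p * Cp ^ p * abar ^ (p * (1 - γp)) * rbar ^ (p * γp - 2) = 1 / 2)
    (hb : 0 < b) (hbabar : b < abar) (hr : 0 < r) (hrrbar : r < rbar)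
    (hgneg : 1 / 2 - Λ / 2 * C4 ^ 4 * r * b
      - 2 * |l3| / p * Cp ^ p * b ^ (p * (1 - γp)) * r ^ (p * γp - 2) < 0) :
    r < (b / abar) ^ ((1:ℝ) / 3) * rbar := by
  have hp0 : (0:ℝ) < p := by linarith
  have habs : 0 < |l3| := abs_pos.mpr (ne_of_lt hl3)
  have hq : p * γp = 3 * (p - 2) / 2 := by rw [hγ]; field_simp
  have hq2 : p * γp < 2 := by rw [hq]; linarith
  have hCpp : 0 < Cp ^ p := Real.rpow_pos_of_pos hCp p
  by_contra hcon
  push_neg at hcon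
  have hμ0 : 0 < b / abar := div_pos hb habarpos
  have hμ1 : b / abar < 1 := (div_lt_one habarpos).mpr hbabar
  have hs1pos : 0 < (b / abar) ^ ((1:ℝ) / 3) * rbar :=
    mul_pos (Real.rpow_pos_of_pos hμ0 _) hrbarpos
  set T1 := Λ / 2 * C4 ^ 4 * rbar * abar with hT1def
  set T2 := 2 * |l3| / p * Cp ^ p * abar ^ (p * (1 - γp)) * rbar ^ (p * γp - 2) with hT2def
  have hT1pos : 0 < T1 := by positivity
  have hT2pos : 0 < T2 := by
    have h1 : 0 < abar ^ (p * (1 - γp)) := Real.rpow_pos_of_pos habarpos _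
    have h2 : 0 < rbar ^ (p * γp - 2) := Real.rpow_pos_of_pos hrbarpos _
    positivity
  have hX1 : Λ / 2 * C4 ^ 4 * r * b < (b / abar) * T1 := by
    have h : (b / abar) * T1 = Λ / 2 * C4 ^ 4 * rbar * b := by
      rw [hT1def]; field_simp
    rw [h]
    have hcoef : 0 < Λ / 2 * C4 ^ 4 * b := by positivity
    calc Λ / 2 * C4 ^ 4 * r * b = Λ / 2 * C4 ^ 4 * b * r := by ring
      _ < Λ / 2 * C4 ^ 4 * b * rbar := mul_lt_mul_of_pos_left hrrbar hcoef
      _ = Λ / 2 * C4 ^ 4 * rbar * b := by ring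
  have hrle : r ^ (p * γp - 2) ≤ ((b / abar) ^ ((1:ℝ) / 3) * rbar) ^ (p * γp - 2) :=
    Real.rpow_le_rpow_of_nonpos hs1pos hcon (by linarith)
  have hb_eq : b = (b / abar) * abar := by field_simp
  have hbpow : b ^ (p * (1 - γp)) = (b / abar) ^ (p * (1 - γp)) * abar ^ (p * (1 - γp)) := by
    nth_rewrite 1 [hb_eq]
    exact Real.mul_rpow hμ0.le habarpos.le
  have hs1pow : ((b / abar) ^ ((1:ℝ) / 3) * rbar) ^ (p * γp - 2)
      = (b / abar) ^ ((1 / 3) * (p * γp - 2)) * rbar ^ (p * γp - 2) := by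
    rw [Real.mul_rpow (Real.rpow_pos_of_pos hμ0 _).le hrbarpos.le, ← Real.rpow_mul hμ0.le]
  have hμcomb : (b / abar) ^ (p * (1 - γp)) * (b / abar) ^ ((1 / 3) * (p * γp - 2))
      = (b / abar) ^ ((4:ℝ) / 3) := by
    rw [← Real.rpow_add hμ0]
    congr 1
    linear_combination (-(2:ℝ)/3) * hq
  have hμ43 : (b / abar) ^ ((4:ℝ) / 3) < 1 := Real.rpow_lt_one hμ0.le hμ1 (by norm_num)
  have hX2 : 2 * |l3| / p * Cp ^ p * b ^ (p * (1 - γp)) * r ^ (p * γp - 2)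
      ≤ (b / abar) ^ ((4:ℝ) / 3) * T2 := by
    have hcoef : 0 ≤ 2 * |l3| / p * Cp ^ p * b ^ (p * (1 - γp)) := by
      have := Real.rpow_pos_of_pos hb (p * (1 - γp)); positivity
    calc 2 * |l3| / p * Cp ^ p * b ^ (p * (1 - γp)) * r ^ (p * γp - 2)
        ≤ 2 * |l3| / p * Cp ^ p * b ^ (p * (1 - γp))
          * ((b / abar) ^ ((1:ℝ) / 3) * rbar) ^ (p * γp - 2) :=
          mul_le_mul_of_nonneg_left hrle hcoef
      _ = (b / abar) ^ ((4:ℝ) / 3) * T2 := by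
          rw [hs1pow, hbpow, hT2def, ← hμcomb]; ring
  have hμT1 : (b / abar) * T1 < T1 := by nlinarith
  have hμT2 : (b / abar) ^ ((4:ℝ) / 3) * T2 ≤ T2 := by nlinarith
  linarith
set_option maxHeartbeats 2000000 in
theorem stmt17 (Λ C4 Cp l1 l2 l3 ω p γp α a1 a2 abar rbar : ℝ) (g : ℝ → ℝ → ℝ)
    (hΛ : 0 < Λ) (hC4 : 0 < C4) (hCp : 0 < Cp)
    (hB : (l1, l2) ∈ Bset) (hl3 : l3 < 0)
    (hp1 : 2 < p) (hp2 : p < 10 / 3) (hω : 0 ≤ ω)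
    (hγ : γp = 3 * (p - 2) / (2 * p))
    (hg : g = fun b r => 1 / 2 - Λ / 2 * C4 ^ 4 * r * b
      - 2 * |l3| / p * Cp ^ p * b ^ (p * (1 - γp)) * r ^ (p * γp - 2))
    (hα : α = 1 / 2 * (Λ * C4 ^ 4) ^ ((p * γp - 2) / (p * γp - 3))
        * (4 * |l3| * (2 - p * γp) * Cp ^ p / p) ^ (1 / (3 - p * γp))
      + 2 * (Cp ^ p * |l3| / p) ^ (1 / (3 - p * γp))
        * (4 * (2 - p * γp) / (Λ * C4 ^ 4)) ^ ((p * γp - 2) / (3 - p * γp)))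
    (habar : abar = (1 / (2 * α)) ^ ((3 : ℝ) / 4))
    (hrbar : rbar = (4 * |l3| * (2 - p * γp) * Cp ^ p * abar ^ ((1 - γp) * p - 1)
      / (Λ * C4 ^ 4 * p)) ^ (1 / (3 - p * γp)))
    (ha1 : 0 < a1) (h12 : a1 < a2) (ha2 : a2 < abar)
    (hJlow : ∀ (u : E3 → ℝ) (b : ℝ), 0 < b → massSq u = b ^ 2 →
      gradSq u * g b (Real.sqrt (gradSq u)) ≤ Jfun 0 l1 l2 l3 p u)
    (hneg1 : sInf (Jfun ω l1 l2 l3 p '' Wset a1 rbar) < 0)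
    (hneg3 : sInf (Jfun ω l1 l2 l3 p '' Wset (Real.sqrt (a2 ^ 2 - a1 ^ 2)) rbar) < 0) :
    sInf (Jfun ω l1 l2 l3 p '' Wset a2 rbar)
        ≤ sInf (Jfun ω l1 l2 l3 p '' Wset a1 rbar)
          + sInf (Jfun ω l1 l2 l3 p '' Wset (Real.sqrt (a2 ^ 2 - a1 ^ 2)) rbar) ∧
      ((∃ u ∈ Wset a1 rbar,
          Jfun ω l1 l2 l3 p u = sInf (Jfun ω l1 l2 l3 p '' Wset a1 rbar)) ∨
       (∃ u ∈ Wset (Real.sqrt (a2 ^ 2 - a1 ^ 2)) rbar,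
          Jfun ω l1 l2 l3 p u
            = sInf (Jfun ω l1 l2 l3 p '' Wset (Real.sqrt (a2 ^ 2 - a1 ^ 2)) rbar)) →
        sInf (Jfun ω l1 l2 l3 p '' Wset a2 rbar)
          < sInf (Jfun ω l1 l2 l3 p '' Wset a1 rbar)
            + sInf (Jfun ω l1 l2 l3 p '' Wset (Real.sqrt (a2 ^ 2 - a1 ^ 2)) rbar)) := by
  obtain ⟨habarpos, hrbarpos, hTT⟩ :=
    consts_fact Λ C4 Cp l3 p γp α abar rbar hΛ hC4 hCp hl3 hp1 hp2 hγ hα habar hrbar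
  have hp0 : (0:ℝ) < p := by linarith
  have habs : 0 < |l3| := abs_pos.mpr (ne_of_lt hl3)
  have hq : p * γp = 3 * (p - 2) / 2 := by rw [hγ]; field_simp
  have hq2 : p * γp < 2 := by rw [hq]; linarith
  have hq0 : 0 < p * γp := by rw [hq]; linarith
  have hCpp : 0 < Cp ^ p := Real.rpow_pos_of_pos hCp p
  have ha2pos : 0 < a2 := lt_trans ha1 h12
  have ha2sq : 0 < a2 ^ 2 := by positivity
  have hd2 : 0 < a2 ^ 2 - a1 ^ 2 := by nlinarith
  have hs0 : 0 < Real.sqrt (a2 ^ 2 - a1 ^ 2) := Real.sqrt_pos.mpr hd2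
  have hs2 : Real.sqrt (a2 ^ 2 - a1 ^ 2) ^ 2 = a2 ^ 2 - a1 ^ 2 := Real.sq_sqrt hd2.le
  have hsa2 : Real.sqrt (a2 ^ 2 - a1 ^ 2) < a2 := by
    have h := Real.sqrt_lt_sqrt hd2.le (show a2 ^ 2 - a1 ^ 2 < a2 ^ 2 by nlinarith)
    rwa [Real.sqrt_sq ha2pos.le] at h
  have hgradnn : ∀ u : E3 → ℝ, 0 ≤ gradSq u := fun u => integral_nonneg (fun x => by positivity)
  have hJsplit : ∀ u : E3 → ℝ,
      Jfun ω l1 l2 l3 p u = Jfun 0 l1 l2 l3 p u + ω * massSq u := by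
    intro u; unfold Jfun; ring
  set Jf := Jfun ω l1 l2 l3 p with hJf
  -- lower bound over `Wset a2 rbar`
  have hLB : ∀ v ∈ Wset a2 rbar,
      -(Λ / 2 * C4 ^ 4 * a2 * rbar ^ 3
        + 2 * |l3| / p * Cp ^ p * a2 ^ (p * (1 - γp)) * rbar ^ (p * γp)) ≤ Jf v := by
    intro v hv
    obtain ⟨hv1, hv2⟩ := hv
    have hlow := hJlow v a2 ha2pos hv1
    simp only [hg] at hlow
    have hgr0 : 0 ≤ gradSq v := hgradnn v
    set r := Real.sqrt (gradSq v) with hrdef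
    have hr0 : 0 ≤ r := Real.sqrt_nonneg _
    have hr2 : r ^ 2 = gradSq v := Real.sq_sqrt hgr0
    have hωm : 0 ≤ ω * massSq v := by rw [hv1]; positivity
    have hcoef2 : 0 ≤ 2 * |l3| / p * Cp ^ p * a2 ^ (p * (1 - γp)) := by
      have := Real.rpow_pos_of_pos ha2pos (p * (1 - γp)); positivity
    have hb1 : 0 ≤ Λ / 2 * C4 ^ 4 * a2 * rbar ^ 3 := by positivity
    have hb2 : 0 ≤ 2 * |l3| / p * Cp ^ p * a2 ^ (p * (1 - γp)) * rbar ^ (p * γp) := by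
      have := Real.rpow_pos_of_pos hrbarpos (p * γp); positivity
    rcases eq_or_lt_of_le hr0 with h0 | hrpos
    · have hgv0 : gradSq v = 0 := by rw [← hr2, ← h0]; ring
      rw [hJsplit v]
      rw [hgv0] at hlow
      simp only [zero_mul] at hlow
      linarith
    · have hr3 : r ^ 3 ≤ rbar ^ 3 := pow_le_pow_left₀ hr0 hv2.le 3
      have hrpq : r ^ (p * γp) ≤ rbar ^ (p * γp) := Real.rpow_le_rpow hr0 hv2.le hq0.le
      have hr2e : r ^ 2 * r ^ (p * γp - 2) = r ^ (p * γp) := by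
        rw [← Real.rpow_natCast r 2, ← Real.rpow_add hrpos]
        congr 1
        push_cast
        ring
      have hexp : gradSq v * (1 / 2 - Λ / 2 * C4 ^ 4 * r * a2
            - 2 * |l3| / p * Cp ^ p * a2 ^ (p * (1 - γp)) * r ^ (p * γp - 2))
          = r ^ 2 / 2 - Λ / 2 * C4 ^ 4 * a2 * r ^ 3
            - 2 * |l3| / p * Cp ^ p * a2 ^ (p * (1 - γp)) * r ^ (p * γp) := by
        rw [← hr2]
        linear_combination (-(2:ℝ) * |l3| / p * Cp ^ p * a2 ^ (p * (1 - γp))) * hr2e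
      rw [hexp] at hlow
      rw [hJsplit v]
      have hm1 : Λ / 2 * C4 ^ 4 * a2 * r ^ 3 ≤ Λ / 2 * C4 ^ 4 * a2 * rbar ^ 3 := by
        have : (0:ℝ) ≤ Λ / 2 * C4 ^ 4 * a2 := by positivity
        exact mul_le_mul_of_nonneg_left hr3 this
      have hm2 : 2 * |l3| / p * Cp ^ p * a2 ^ (p * (1 - γp)) * r ^ (p * γp)
          ≤ 2 * |l3| / p * Cp ^ p * a2 ^ (p * (1 - γp)) * rbar ^ (p * γp) :=
        mul_le_mul_of_nonneg_left hrpq hcoef2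
      linarith [sq_nonneg r]
  have hBdd : BddBelow (Jf '' Wset a2 rbar) := by
    refine ⟨-(Λ / 2 * C4 ^ 4 * a2 * rbar ^ 3
      + 2 * |l3| / p * Cp ^ p * a2 ^ (p * (1 - γp)) * rbar ^ (p * γp)), ?_⟩
    rintro x ⟨v, hv, rfl⟩
    exact hLB v hv
  -- the key scaling construction
  have key : ∀ b : ℝ, 0 < b → b < a2 → ∀ u : E3 → ℝ, u ∈ Wset b rbar → Jf u < 0 →
      ∃ v ∈ Wset a2 rbar, Jf v < (a2 / b) ^ 2 * Jf u := by
    intro b hb hba2 u hu hJu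
    obtain ⟨hu1, hu2⟩ := hu
    have hlow := hJlow u b hb hu1
    simp only [hg] at hlow
    have hJ0 : Jfun 0 l1 l2 l3 p u < 0 := by
      have hsp := hJsplit u
      have hm : 0 ≤ ω * massSq u := by rw [hu1]; positivity
      linarith
    have hgr0 : 0 ≤ gradSq u := hgradnn u
    have hgrpos : 0 < gradSq u := by
      rcases eq_or_lt_of_le hgr0 with h0 | h
      · exfalso
        rw [← h0] at hlow
        simp only [zero_mul] at hlow
        linarith
      · exact h
    set r := Real.sqrt (gradSq u) with hrdef
    have hrpos : 0 < r := Real.sqrt_pos.mpr hgrpos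
    have hr2 : r ^ 2 = gradSq u := Real.sq_sqrt hgr0
    have hgneg : 1 / 2 - Λ / 2 * C4 ^ 4 * r * b
        - 2 * |l3| / p * Cp ^ p * b ^ (p * (1 - γp)) * r ^ (p * γp - 2) < 0 := by
      by_contra hcg
      push_neg at hcg
      have := mul_nonneg hgr0 hcg
      linarith
    have hrb := rbound_fact Λ C4 Cp l3 p γp abar rbar b r hΛ hC4 hCp hl3 hp1 hp2 hγ
      habarpos hrbarpos hTT hb (lt_trans hba2 ha2) hrpos hu2 hgneg
    set θ := a2 / b with hθdef
    have hθ1 : 1 < θ := (one_lt_div hb).mpr hba2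
    have hθpos : 0 < θ := by linarith
    set lam := θ ^ ((2:ℝ) / 3) with hlamdef
    have hlam1 : 1 < lam :=
      (Real.one_lt_rpow_iff_of_pos hθpos).mpr (Or.inl ⟨hθ1, by norm_num⟩)
    have hlampos : 0 < lam := by linarith
    have hlam3 : lam ^ 3 = θ ^ 2 := by
      rw [hlamdef, ← Real.rpow_natCast (θ ^ ((2:ℝ) / 3)) 3, ← Real.rpow_mul hθpos.le,
        ← Real.rpow_natCast θ 2]
      norm_num
    refine ⟨fun x => u (lam⁻¹ • x), ⟨?_, ?_⟩, ?_⟩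
    · rw [massSq_scale u lam hlampos, hu1, hlam3, hθdef]
      field_simp
    · rw [gradSq_scale u lam hlampos, Real.sqrt_mul hlampos.le, ← hrdef]
      have hsl : Real.sqrt lam = θ ^ ((1:ℝ) / 3) := by
        rw [hlamdef, Real.sqrt_eq_rpow, ← Real.rpow_mul hθpos.le]
        norm_num
      rw [hsl]
      have hstep : θ ^ ((1:ℝ) / 3) * r < θ ^ ((1:ℝ) / 3) * ((b / abar) ^ ((1:ℝ) / 3) * rbar) :=
        mul_lt_mul_of_pos_left hrb (Real.rpow_pos_of_pos hθpos _)
      have heq : θ ^ ((1:ℝ) / 3) * ((b / abar) ^ ((1:ℝ) / 3) * rbar)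
          = (a2 / abar) ^ ((1:ℝ) / 3) * rbar := by
        rw [← mul_assoc, ← Real.mul_rpow hθpos.le (by positivity : (0:ℝ) ≤ b / abar)]
        rw [hθdef, show a2 / b * (b / abar) = a2 / abar from by field_simp]
      have hlast : (a2 / abar) ^ ((1:ℝ) / 3) < 1 :=
        Real.rpow_lt_one (by positivity) ((div_lt_one habarpos).mpr ha2) (by norm_num)
      have : (a2 / abar) ^ ((1:ℝ) / 3) * rbar < rbar := by
        calc (a2 / abar) ^ ((1:ℝ) / 3) * rbar < 1 * rbar := mul_lt_mul_of_pos_right hlast hrbarpos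
          _ = rbar := one_mul _
      calc θ ^ ((1:ℝ) / 3) * r < (a2 / abar) ^ ((1:ℝ) / 3) * rbar := by rw [← heq]; exact hstep
        _ < rbar := this
    · rw [hJf, Jfun_scale ω l1 l2 l3 p u lam hlampos, hlam3, ← hJf]
      have hlamlt : lam < θ ^ 2 := by
        rw [hlamdef, ← Real.rpow_natCast θ 2]
        exact Real.rpow_lt_rpow_of_exponent_lt hθ1 (by norm_num)
      have hnegterm : 1 / 2 * (lam - θ ^ 2) * gradSq u < 0 :=
        mul_neg_of_neg_of_pos (by linarith) hgrpos
      linarith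
  -- subadditivity machinery
  have hImem : ∀ S : Set ℝ, sInf S < 0 → S.Nonempty := by
    intro S hS
    by_contra h
    rw [Set.not_nonempty_iff_eq_empty] at h
    rw [h, Real.sInf_empty] at hS
    linarith
  have hsub : ∀ b : ℝ, 0 < b → b < a2 → sInf (Jf '' Wset b rbar) < 0 →
      sInf (Jf '' Wset a2 rbar) ≤ (a2 / b) ^ 2 * sInf (Jf '' Wset b rbar) := by
    intro b hb hba2 hneg
    have hne : (Jf '' Wset b rbar).Nonempty := hImem _ hneg
    apply le_of_forall_pos_le_add
    intro ε hε
    have hθsq : 0 < (a2 / b) ^ 2 := by positivity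
    set I := sInf (Jf '' Wset b rbar) with hIdef
    have hε' : 0 < min (ε / (a2 / b) ^ 2) (-I) := lt_min (by positivity) (by linarith)
    obtain ⟨x, hxS, hxlt⟩ := Real.lt_sInf_add_pos hne hε'
    obtain ⟨u, hu, rfl⟩ := hxS
    have hJu : Jf u < 0 := by
      have h1 := min_le_right (ε / (a2 / b) ^ 2) (-I)
      rw [← hIdef] at hxlt
      linarith
    obtain ⟨v, hv, hJv⟩ := key b hb hba2 u hu hJu
    have hle : sInf (Jf '' Wset a2 rbar) ≤ Jf v := csInf_le hBdd ⟨v, hv, rfl⟩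
    rw [← hIdef] at hxlt
    have h2 : (a2 / b) ^ 2 * Jf u < (a2 / b) ^ 2 * (I + min (ε / (a2 / b) ^ 2) (-I)) :=
      mul_lt_mul_of_pos_left hxlt hθsq
    have h3 : (a2 / b) ^ 2 * min (ε / (a2 / b) ^ 2) (-I) ≤ ε := by
      have hminle := min_le_left (ε / (a2 / b) ^ 2) (-I)
      calc (a2 / b) ^ 2 * min (ε / (a2 / b) ^ 2) (-I)
          ≤ (a2 / b) ^ 2 * (ε / (a2 / b) ^ 2) := mul_le_mul_of_nonneg_left hminle hθsq.le
        _ = ε := by field_simp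
    have h2' : (a2 / b) ^ 2 * (I + min (ε / (a2 / b) ^ 2) (-I))
        = (a2 / b) ^ 2 * I + (a2 / b) ^ 2 * min (ε / (a2 / b) ^ 2) (-I) := by ring
    linarith
  have hstrict : ∀ b : ℝ, 0 < b → b < a2 → sInf (Jf '' Wset b rbar) < 0 →
      (∃ u ∈ Wset b rbar, Jf u = sInf (Jf '' Wset b rbar)) →
      sInf (Jf '' Wset a2 rbar) < (a2 / b) ^ 2 * sInf (Jf '' Wset b rbar) := by
    rintro b hb hba2 hneg ⟨u, hu, hmin⟩
    have hJu : Jf u < 0 := by rw [hmin]; exact hneg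
    obtain ⟨v, hv, hJv⟩ := key b hb hba2 u hu hJu
    have hle : sInf (Jf '' Wset a2 rbar) ≤ Jf v := csInf_le hBdd ⟨v, hv, rfl⟩
    rw [hmin] at hJv
    linarith
  -- conclusion
  set I1 := sInf (Jf '' Wset a1 rbar) with hI1def
  set I3 := sInf (Jf '' Wset (Real.sqrt (a2 ^ 2 - a1 ^ 2)) rbar) with hI3def
  set I2 := sInf (Jf '' Wset a2 rbar) with hI2def
  have h1 : I2 ≤ (a2 / a1) ^ 2 * I1 := hsub a1 ha1 h12 hneg1
  have h3 : I2 ≤ (a2 / Real.sqrt (a2 ^ 2 - a1 ^ 2)) ^ 2 * I3 := hsub _ hs0 hsa2 hneg3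
  have e1 : a1 ^ 2 * I2 ≤ a2 ^ 2 * I1 := by
    calc a1 ^ 2 * I2 ≤ a1 ^ 2 * ((a2 / a1) ^ 2 * I1) :=
        mul_le_mul_of_nonneg_left h1 (sq_nonneg a1)
      _ = a2 ^ 2 * I1 := by field_simp <;> ring
  have e3 : (a2 ^ 2 - a1 ^ 2) * I2 ≤ a2 ^ 2 * I3 := by
    calc (a2 ^ 2 - a1 ^ 2) * I2 = Real.sqrt (a2 ^ 2 - a1 ^ 2) ^ 2 * I2 := by rw [hs2]
      _ ≤ Real.sqrt (a2 ^ 2 - a1 ^ 2) ^ 2 * ((a2 / Real.sqrt (a2 ^ 2 - a1 ^ 2)) ^ 2 * I3) :=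
        mul_le_mul_of_nonneg_left h3 (sq_nonneg _)
      _ = a2 ^ 2 * I3 := by
          rw [div_pow]
          field_simp <;> ring
  have hid : a2 ^ 2 * I2 = a1 ^ 2 * I2 + (a2 ^ 2 - a1 ^ 2) * I2 := by ring
  constructor
  · have hsum : a2 ^ 2 * I2 ≤ a2 ^ 2 * (I1 + I3) := by
      have : a2 ^ 2 * (I1 + I3) = a2 ^ 2 * I1 + a2 ^ 2 * I3 := by ring
      linarith [e1, e3, hid]
    exact (mul_le_mul_iff_right₀ ha2sq).mp hsum
  · rintro (⟨u, hu, hmin⟩ | ⟨u, hu, hmin⟩)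
    · have h1' := hstrict a1 ha1 h12 hneg1 ⟨u, hu, hmin⟩
      have e1' : a1 ^ 2 * I2 < a2 ^ 2 * I1 := by
        calc a1 ^ 2 * I2 < a1 ^ 2 * ((a2 / a1) ^ 2 * I1) :=
            mul_lt_mul_of_pos_left h1' (by positivity)
          _ = a2 ^ 2 * I1 := by field_simp <;> ring
      have hsum : a2 ^ 2 * I2 < a2 ^ 2 * (I1 + I3) := by
        have : a2 ^ 2 * (I1 + I3) = a2 ^ 2 * I1 + a2 ^ 2 * I3 := by ring
        linarith [e1', e3, hid]
      exact (mul_lt_mul_iff_right₀ ha2sq).mp hsum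
    · have h3' := hstrict _ hs0 hsa2 hneg3 ⟨u, hu, hmin⟩
      have e3' : (a2 ^ 2 - a1 ^ 2) * I2 < a2 ^ 2 * I3 := by
        calc (a2 ^ 2 - a1 ^ 2) * I2 = Real.sqrt (a2 ^ 2 - a1 ^ 2) ^ 2 * I2 := by rw [hs2]
          _ < Real.sqrt (a2 ^ 2 - a1 ^ 2) ^ 2 * ((a2 / Real.sqrt (a2 ^ 2 - a1 ^ 2)) ^ 2 * I3) :=
            mul_lt_mul_of_pos_left h3' (by positivity)
          _ = a2 ^ 2 * I3 := by
              rw [div_pow]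
              field_simp <;> ring
      have hsum : a2 ^ 2 * I2 < a2 ^ 2 * (I1 + I3) := by
        have : a2 ^ 2 * (I1 + I3) = a2 ^ 2 * I1 + a2 ^ 2 * I3 := by ring
        linarith [e1, e3', hid]
      exact (mul_lt_mul_iff_right₀ ha2sq).mp hsum
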